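/- Let G be a group acting on a set I such that every orbit of the action is infinite. Then for every finite subset F ⊆ I there exists g ∈ G with (g · F) ∩ F = ∅. -/

import Mathlib

open scoped Pointwise

/-- If every orbit of an action of a group `G` on a set `I` is infinite, then every finite
subset `F ⊆ I` can be moved off itself: there is `g ∈ G` with `(g • F) ∩ F = ∅`. -/
theorem stmt2 {G I : Type*} [Group G] [MulAction G I] [DecidableEq I]
    (horb : ∀ i : I, (MulAction.orbit G i).Infinite) (F : Finset I) :
    ∃ g : G, F.image (fun x => g • x) ∩ F = ∅ := by
  classical
  by_contra hcon
  push_neg at hcon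
  -- for every g there exist x ∈ F with g • x ∈ F
  have key : ∀ g : G, ∃ x ∈ F, g • x ∈ F := by
    intro g
    have := hcon g
    obtain ⟨y, hy⟩ := this
    rw [Finset.mem_inter, Finset.mem_image] at hy
    obtain ⟨⟨x, hx, hxy⟩, hyF⟩ := hy
    exact ⟨x, hx, hxy ▸ hyF⟩
  set s : Finset (I × I) :=
    (F ×ˢ F).filter (fun p => ∃ g : G, g • p.1 = p.2) with hs
  have hne : ∀ p ∈ s, ∃ g : G, g • p.1 = p.2 := fun p hp =>
    (Finset.mem_filter.mp hp).2
  choose! gp hgp using hne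
  have hcovers : ⋃ p ∈ s, ((gp p • (MulAction.stabilizer G p.1 : Set G)) : Set G) = Set.univ := by
    rw [Set.eq_univ_iff_forall]
    intro g
    obtain ⟨x, hx, hgx⟩ := key g
    have hp : (x, g • x) ∈ s := by
      rw [hs, Finset.mem_filter, Finset.mem_product]
      exact ⟨⟨hx, hgx⟩, g, rfl⟩
    refine Set.mem_biUnion hp ?_
    rw [mem_leftCoset_iff, SetLike.mem_coe, MulAction.mem_stabilizer_iff,
      mul_smul, inv_smul_eq_iff]
    exact (hgp _ hp).symm
  obtain ⟨p, hp, hfin⟩ := Subgroup.exists_finiteIndex_of_leftCoset_cover hcovers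
  have : (MulAction.orbit G p.1).Finite := by
    haveI := hfin
    haveI : Finite (G ⧸ MulAction.stabilizer G p.1) :=
      Subgroup.finite_quotient_of_finiteIndex
    exact Set.finite_coe_iff.mp
      ((MulAction.orbitEquivQuotientStabilizer G p.1).finite_iff.mpr this)
  exact horb p.1 this
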